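/- arXiv:2209.13250 — 2 statements merged into one kernel-verified Lean document; each statement's English description precedes it below -/
import Mathlib

section
/- Let G be an r-graph on [n] and x a feasible weight vector on G. Suppose i ≠ j in [n] satisfy L_G(i\j) = L_G(j\i) = ∅, where L_G(j\i) = {e : i ∉ e, e ∪ {j} ∈ E(G), e ∪ {i} ∉ E(G)}. Define y by y_ℓ = x_ℓ for ℓ ≠ i,j and y_i = y_j = (x_i + x_j)/2. Then λ(G, y) ≥ λ(G, x). -/
open Finset

/-- A (finite) hypergraph with vertex set `verts ⊆ ℕ` and edge set `edges`. -/
structure LHypergraph where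
  verts : Finset ℕ
  edges : Finset (Finset ℕ)

/-- Well-formedness: every edge is a subset of the vertex set. -/
def LHypergraph.IsWf (G : LHypergraph) : Prop := ∀ e ∈ G.edges, e ⊆ G.verts

/-- `G` is `r`-uniform: every edge has `r` vertices. -/
def LHypergraph.IsUniform (G : LHypergraph) (r : ℕ) : Prop := ∀ e ∈ G.edges, e.card = r

/-- The Lagrangian polynomial `λ(G, x) = ∑_{e ∈ E(G)} ∏_{i ∈ e} x_i`. -/
noncomputable def lagPoly (G : LHypergraph) (x : ℕ → ℝ) : ℝ := ∑ e ∈ G.edges, ∏ i ∈ e, x i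

/-- Feasible weight vectors: the standard simplex on the vertex set of `G`. -/
def simplex (G : LHypergraph) : Set (ℕ → ℝ) :=
  {x | (∀ i, 0 ≤ x i ∧ x i ≤ 1) ∧ ∑ i ∈ G.verts, x i = 1}

/-- The Lagrangian `λ(G)`: the supremum of `λ(G, x)` over the simplex. -/
noncomputable def lag (G : LHypergraph) : ℝ := sSup (lagPoly G '' simplex G)

/-- `L_G(j\i) = {e : i ∉ e, e ∪ {j} ∈ E(G), e ∪ {i} ∉ E(G)}`. -/
def linkDiff (G : LHypergraph) (j i : ℕ) : Set (Finset ℕ) :=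
  {e | i ∉ e ∧ insert j e ∈ G.edges ∧ insert i e ∉ G.edges}

/-- Symmetrization: if `L_G(i\j) = L_G(j\i) = ∅` and `y` is obtained from a
feasible weight vector `x` by replacing both `x i` and `x j` with their
average, then `λ(G, y) ≥ λ(G, x)`. -/
theorem stmt_3 (r : ℕ) (G : LHypergraph) (hwf : G.IsWf) (hu : G.IsUniform r)
    (x : ℕ → ℝ) (hx : x ∈ simplex G) (i j : ℕ) (hij : i ≠ j)
    (hLi : linkDiff G i j = ∅) (hLj : linkDiff G j i = ∅)
    (y : ℕ → ℝ)
    (hy : y = Function.update (Function.update x i ((x i + x j) / 2)) j ((x i + x j) / 2)) :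
    lagPoly G x ≤ lagPoly G y := by

  classical
  obtain ⟨hx0, -⟩ := hx
  set m : ℝ := (x i + x j) / 2 with hm
  have hyi : y i = m := by
    subst hy; rw [Function.update_of_ne hij, Function.update_self]
  have hyj : y j = m := by
    subst hy; rw [Function.update_self]
  have hyk : ∀ k, k ≠ i → k ≠ j → y k = x k := by
    intro k hk1 hk2
    subst hy; rw [Function.update_of_ne hk2, Function.update_of_ne hk1]
  -- empty link conditions, unpacked
  have hLi' : ∀ f : Finset ℕ, j ∉ f → insert i f ∈ G.edges → insert j f ∈ G.edges := by
    intro f h1 h2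
    by_contra h3
    have : f ∈ linkDiff G i j := ⟨h1, h2, h3⟩
    rw [hLi] at this; exact this
  have hLj' : ∀ f : Finset ℕ, i ∉ f → insert j f ∈ G.edges → insert i f ∈ G.edges := by
    intro f h1 h2
    by_contra h3
    have : f ∈ linkDiff G j i := ⟨h1, h2, h3⟩
    rw [hLj] at this; exact this
  -- split the sum into four parts
  have key : ∀ z : ℕ → ℝ, lagPoly G z =
      (∑ e ∈ G.edges.filter (fun e => i ∈ e ∧ j ∈ e), ∏ k ∈ e, z k)
      + ((∑ e ∈ G.edges.filter (fun e => i ∈ e ∧ j ∉ e), ∏ k ∈ e, z k)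
      + (∑ e ∈ G.edges.filter (fun e => i ∉ e ∧ j ∈ e), ∏ k ∈ e, z k))
      + (∑ e ∈ G.edges.filter (fun e => i ∉ e ∧ j ∉ e), ∏ k ∈ e, z k) := by
    intro z
    rw [lagPoly, ← Finset.sum_filter_add_sum_filter_not G.edges (fun e => i ∈ e),
      ← Finset.sum_filter_add_sum_filter_not (G.edges.filter (fun e => i ∈ e))
        (fun e => j ∈ e),
      ← Finset.sum_filter_add_sum_filter_not (G.edges.filter (fun e => i ∉ e))
        (fun e => j ∈ e)]
    simp only [Finset.filter_filter]
    ring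
  rw [key x, key y]
  -- the "neither" part is equal
  have hD : (∑ e ∈ G.edges.filter (fun e => i ∉ e ∧ j ∉ e), ∏ k ∈ e, x k)
      = ∑ e ∈ G.edges.filter (fun e => i ∉ e ∧ j ∉ e), ∏ k ∈ e, y k := by
    apply Finset.sum_congr rfl
    intro e he
    rw [Finset.mem_filter] at he
    apply Finset.prod_congr rfl
    intro k hk
    exact (hyk k (fun h => he.2.1 (h ▸ hk)) (fun h => he.2.2 (h ▸ hk))).symm
  -- the bijection between B and C
  have hS : (∑ e ∈ G.edges.filter (fun e => i ∉ e ∧ j ∈ e), ∏ k ∈ e.erase j, x k)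
      = ∑ e ∈ G.edges.filter (fun e => i ∈ e ∧ j ∉ e), ∏ k ∈ e.erase i, x k := by
    refine Finset.sum_bij' (fun e _ => insert i (e.erase j)) (fun e _ => insert j (e.erase i))
      ?_ ?_ ?_ ?_ ?_
    · intro e he
      obtain ⟨heE, hie, hje⟩ := Finset.mem_filter.1 he
      have hif : i ∉ e.erase j := fun h => hie (Finset.mem_of_mem_erase h)
      refine Finset.mem_filter.2 ⟨?_, Finset.mem_insert_self _ _, ?_⟩
      · exact hLj' _ hif (by rwa [Finset.insert_erase hje])
      · intro h
        rcases Finset.mem_insert.1 h with h | h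
        · exact hij h.symm
        · exact (Finset.notMem_erase j e) h
    · intro e he
      obtain ⟨heE, hie, hje⟩ := Finset.mem_filter.1 he
      have hjf : j ∉ e.erase i := fun h => hje (Finset.mem_of_mem_erase h)
      refine Finset.mem_filter.2 ⟨?_, ?_, Finset.mem_insert_self _ _⟩
      · exact hLi' _ hjf (by rwa [Finset.insert_erase hie])
      · intro h
        rcases Finset.mem_insert.1 h with h | h
        · exact hij h
        · exact (Finset.notMem_erase i e) h
    · intro e he
      obtain ⟨heE, hie, hje⟩ := Finset.mem_filter.1 he
      show insert j ((insert i (e.erase j)).erase i) = e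
      rw [Finset.erase_insert (fun h => hie (Finset.mem_of_mem_erase h)),
        Finset.insert_erase hje]
    · intro e he
      obtain ⟨heE, hie, hje⟩ := Finset.mem_filter.1 he
      show insert i ((insert j (e.erase i)).erase j) = e
      rw [Finset.erase_insert (fun h => hje (Finset.mem_of_mem_erase h)),
        Finset.insert_erase hie]
    · intro e he
      obtain ⟨heE, hie, hje⟩ := Finset.mem_filter.1 he
      show _ = ∏ k ∈ (insert i (e.erase j)).erase i, x k
      rw [Finset.erase_insert (fun h => hie (Finset.mem_of_mem_erase h))]
  -- products over sets avoiding i and j agree for x and y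
  have hprod : ∀ e : Finset ℕ, i ∉ e → j ∉ e → (∏ k ∈ e, y k) = ∏ k ∈ e, x k := by
    intro e hie hje
    apply Finset.prod_congr rfl
    intro k hk
    exact hyk k (fun h => hie (h ▸ hk)) (fun h => hje (h ▸ hk))
  -- the B and C parts
  have hB : ∀ z : ℕ → ℝ, (∑ e ∈ G.edges.filter (fun e => i ∈ e ∧ j ∉ e), ∏ k ∈ e, z k)
      = z i * ∑ e ∈ G.edges.filter (fun e => i ∈ e ∧ j ∉ e), ∏ k ∈ e.erase i, z k := by
    intro z
    rw [Finset.mul_sum]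
    apply Finset.sum_congr rfl
    intro e he
    rw [Finset.mem_filter] at he
    rw [Finset.mul_prod_erase e z he.2.1]
  have hC : ∀ z : ℕ → ℝ, (∑ e ∈ G.edges.filter (fun e => i ∉ e ∧ j ∈ e), ∏ k ∈ e, z k)
      = z j * ∑ e ∈ G.edges.filter (fun e => i ∉ e ∧ j ∈ e), ∏ k ∈ e.erase j, z k := by
    intro z
    rw [Finset.mul_sum]
    apply Finset.sum_congr rfl
    intro e he
    rw [Finset.mem_filter] at he
    rw [Finset.mul_prod_erase e z he.2.2]
  have hBy : (∑ e ∈ G.edges.filter (fun e => i ∈ e ∧ j ∉ e), ∏ k ∈ e.erase i, y k)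
      = ∑ e ∈ G.edges.filter (fun e => i ∈ e ∧ j ∉ e), ∏ k ∈ e.erase i, x k := by
    apply Finset.sum_congr rfl
    intro e he
    rw [Finset.mem_filter] at he
    exact hprod _ (Finset.notMem_erase i e) (fun h => he.2.2 (Finset.mem_of_mem_erase h))
  have hCy : (∑ e ∈ G.edges.filter (fun e => i ∉ e ∧ j ∈ e), ∏ k ∈ e.erase j, y k)
      = ∑ e ∈ G.edges.filter (fun e => i ∉ e ∧ j ∈ e), ∏ k ∈ e.erase j, x k := by
    apply Finset.sum_congr rfl
    intro e he
    rw [Finset.mem_filter] at he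
    exact hprod _ (fun h => he.2.1 (Finset.mem_of_mem_erase h)) (Finset.notMem_erase j e)
  have hBC : ((∑ e ∈ G.edges.filter (fun e => i ∈ e ∧ j ∉ e), ∏ k ∈ e, x k)
      + (∑ e ∈ G.edges.filter (fun e => i ∉ e ∧ j ∈ e), ∏ k ∈ e, x k))
      = ((∑ e ∈ G.edges.filter (fun e => i ∈ e ∧ j ∉ e), ∏ k ∈ e, y k)
      + (∑ e ∈ G.edges.filter (fun e => i ∉ e ∧ j ∈ e), ∏ k ∈ e, y k)) := by
    rw [hB x, hC x, hB y, hC y, hBy, hCy, hS, hyi, hyj, hm]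
    ring
  -- the A part: AM-GM
  have hA : (∑ e ∈ G.edges.filter (fun e => i ∈ e ∧ j ∈ e), ∏ k ∈ e, x k)
      ≤ ∑ e ∈ G.edges.filter (fun e => i ∈ e ∧ j ∈ e), ∏ k ∈ e, y k := by
    apply Finset.sum_le_sum
    intro e he
    rw [Finset.mem_filter] at he
    obtain ⟨heE, hie, hje⟩ := he
    have hje' : j ∈ e.erase i := Finset.mem_erase.2 ⟨fun h => hij h.symm, hje⟩
    rw [← Finset.mul_prod_erase e x hie, ← Finset.mul_prod_erase (e.erase i) x hje',
      ← Finset.mul_prod_erase e y hie, ← Finset.mul_prod_erase (e.erase i) y hje']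
    have hP : (∏ k ∈ (e.erase i).erase j, y k) = ∏ k ∈ (e.erase i).erase j, x k :=
      hprod _ (fun h => Finset.notMem_erase i e (Finset.mem_of_mem_erase h))
        (Finset.notMem_erase j _)
    rw [hP, hyi, hyj, ← mul_assoc, ← mul_assoc]
    have hPnn : (0:ℝ) ≤ ∏ k ∈ (e.erase i).erase j, x k :=
      Finset.prod_nonneg fun k _ => (hx0 k).1
    apply mul_le_mul_of_nonneg_right _ hPnn
    have : x i * x j ≤ m * m := by
      rw [hm]
      nlinarith [sq_nonneg (x i - x j)]
    exact this
  rw [hD]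
  exact add_le_add (add_le_add hA hBC.le) le_rfl
end

section
/- The 3-graph G constructed in the previous remark, with vertex set [t], edges {ijk : i,j,k ∈ [t−1] distinct} ∪ {ijt : i,j ∈ [t−2] distinct} ∪ {1(t−1)t}, and weight vector x with x_i = 1/(t−1) for 1 ≤ i ≤ t−2 and x_j = 1/(2t−2) for j ∈ {t−1, t}, satisfies λ(G, x) = (1/(t−1)³)(C(t−1,3) + 1/4), which exceeds λ(K_{t−1}^3) = C(t−1,3)/(t−1)³. -/
open Finset

/-- The complete 3-graph `K_m³` on `m` vertices. -/
def completeG (m : ℕ) : LHypergraph :=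
  ⟨Finset.range m, (Finset.range m).powersetCard 3⟩

/-- The witness 3-graph on vertex set `{0, …, t−1}` with edges: all triples in
`{0, …, t−2}`, all triples `{i, j, t−1}` with `i, j ∈ {0, …, t−3}`, and the
extra edge `{0, t−2, t−1}`. -/
def W (t : ℕ) : LHypergraph :=
  ⟨Finset.range t,
    ((Finset.range (t - 1)).powersetCard 3) ∪
      (((Finset.range (t - 2)).powersetCard 2).image (insert (t - 1))) ∪
      {({0, t - 2, t - 1} : Finset ℕ)}⟩

lemma sum_powersetCard_const {s : Finset ℕ} {k : ℕ} {c : ℝ} {x : ℕ → ℝ}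
    (h : ∀ i ∈ s, x i = c) :
    ∑ e ∈ s.powersetCard k, ∏ i ∈ e, x i = (s.card.choose k : ℝ) * c ^ k := by
  have : ∀ e ∈ s.powersetCard k, ∏ i ∈ e, x i = c ^ k := by
    intro e he
    obtain ⟨hsub, hcard⟩ := Finset.mem_powersetCard.mp he
    rw [Finset.prod_congr rfl (fun i hi => h i (hsub hi)), Finset.prod_const, hcard]
  rw [Finset.sum_congr rfl this, Finset.sum_const, Finset.card_powersetCard, nsmul_eq_mul]

lemma sum_image_insert {a : ℕ} {s : Finset ℕ} (ha : a ∉ s) {k : ℕ} {x : ℕ → ℝ} {c : ℝ}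
    (hc : ∀ i ∈ s, x i = c) :
    ∑ e ∈ (s.powersetCard k).image (insert a), ∏ i ∈ e, x i
      = (s.card.choose k : ℝ) * (x a * c ^ k) := by
  rw [Finset.sum_image ?inj]
  case inj =>
    intro p hp q hq h
    have hpa : a ∉ p := fun h' => ha ((Finset.mem_powersetCard.mp hp).1 h')
    have hqa : a ∉ q := fun h' => ha ((Finset.mem_powersetCard.mp hq).1 h')
    rw [← Finset.erase_insert hpa, ← Finset.erase_insert hqa, h]
  have : ∀ p ∈ s.powersetCard k, ∏ i ∈ insert a p, x i = x a * c ^ k := by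
    intro p hp
    obtain ⟨hsub, hcard⟩ := Finset.mem_powersetCard.mp hp
    have hpa : a ∉ p := fun h' => ha (hsub h')
    rw [Finset.prod_insert hpa,
      Finset.prod_congr rfl (fun i hi => hc i (hsub hi)), Finset.prod_const, hcard]
  rw [Finset.sum_congr rfl this, Finset.sum_const, Finset.card_powersetCard, nsmul_eq_mul]

/-- The witness graph `W t` with the weight vector assigning `1/(t−1)` to the
first `t−2` vertices and `1/(2t−2)` to the last two satisfies
`λ(W t, x) = (1/(t−1)³)(C(t−1,3) + 1/4) > C(t−1,3)/(t−1)³ = λ(K_{t−1}³)`. -/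
theorem stmt_13 (t : ℕ) (ht : 4 ≤ t)
    (x : ℕ → ℝ)
    (hx : x = fun i => if i < t - 2 then 1 / ((t : ℝ) - 1)
      else if i < t then 1 / (2 * (t : ℝ) - 2) else 0) :
    lagPoly (W t) x = 1 / ((t : ℝ) - 1) ^ 3 * ((Nat.choose (t - 1) 3 : ℝ) + 1 / 4) ∧
    (Nat.choose (t - 1) 3 : ℝ) / ((t : ℝ) - 1) ^ 3 < lagPoly (W t) x := by
  subst hx
  obtain ⟨u, rfl⟩ : ∃ u, t = u + 4 := ⟨t - 4, by omega⟩
  have h1 : u + 4 - 1 = u + 3 := by omega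
  have h2 : u + 4 - 2 = u + 2 := by omega
  set x : ℕ → ℝ := fun i => if i < u + 4 - 2 then 1 / (((u + 4 : ℕ) : ℝ) - 1)
      else if i < u + 4 then 1 / (2 * ((u + 4 : ℕ) : ℝ) - 2) else 0 with hxdef
  set c : ℝ := 1 / ((u : ℝ) + 3) with hcdef
  set d : ℝ := 1 / (2 * (u : ℝ) + 6) with hddef
  have hc : ∀ i ∈ Finset.range (u + 2), x i = c := by
    intro i hi
    rw [Finset.mem_range] at hi
    simp only [hxdef, h2, if_pos hi, hcdef]
    push_cast; ring_nf
  have hd1 : x (u + 2) = d := by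
    simp only [hxdef, h2, hddef]
    rw [if_neg (by omega), if_pos (by omega)]
    push_cast; ring_nf
  have hd2 : x (u + 3) = d := by
    simp only [hxdef, h2, hddef]
    rw [if_neg (by omega), if_pos (by omega)]
    push_cast; ring_nf
  have key : lagPoly (W (u + 4)) x
      = ((u + 2).choose 3 : ℝ) * c ^ 3 + 2 * (((u + 2).choose 2 : ℝ) * (d * c ^ 2))
        + c * d * d := by
    rw [lagPoly, W]
    simp only [h1, h2]
    have hA : Disjoint ((Finset.range (u + 3)).powersetCard 3)
        (((Finset.range (u + 2)).powersetCard 2).image (insert (u + 3))) := by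
      simp only [Finset.disjoint_left, Finset.mem_powersetCard, Finset.mem_image]
      rintro e ⟨hsub, -⟩ ⟨p, hp, rfl⟩
      have := hsub (Finset.mem_insert_self (u + 3) p)
      simp at this
    have hB : Disjoint (((Finset.range (u + 3)).powersetCard 3) ∪
        ((Finset.range (u + 2)).powersetCard 2).image (insert (u + 3)))
        ({({0, u + 2, u + 3} : Finset ℕ)} : Finset (Finset ℕ)) := by
      rw [Finset.disjoint_singleton_right]
      intro h
      rcases Finset.mem_union.mp h with h | h
      · have hsub := (Finset.mem_powersetCard.mp h).1
        have := hsub (show u + 3 ∈ ({0, u + 2, u + 3} : Finset ℕ) by simp)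
        simp at this
      · obtain ⟨p, hp, hpe⟩ := Finset.mem_image.mp h
        have h2' : u + 2 ∈ insert (u + 3) p := by rw [hpe]; simp
        rcases Finset.mem_insert.mp h2' with h' | h'
        · omega
        · have := Finset.mem_range.mp ((Finset.mem_powersetCard.mp hp).1 h')
          omega
    rw [Finset.sum_union hB, Finset.sum_union hA]
    have hrange : Finset.range (u + 3) = insert (u + 2) (Finset.range (u + 2)) :=
      Finset.range_add_one
    have hsplit : (Finset.range (u + 3)).powersetCard 3
        = (Finset.range (u + 2)).powersetCard 3 ∪
          ((Finset.range (u + 2)).powersetCard 2).image (insert (u + 2)) := by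
      rw [hrange, Finset.powersetCard_succ_insert (by simp)]
    have hA' : Disjoint ((Finset.range (u + 2)).powersetCard 3)
        (((Finset.range (u + 2)).powersetCard 2).image (insert (u + 2))) := by
      simp only [Finset.disjoint_left, Finset.mem_powersetCard, Finset.mem_image]
      rintro e ⟨hsub, -⟩ ⟨p, hp, rfl⟩
      have := hsub (Finset.mem_insert_self (u + 2) p)
      simp at this
    rw [hsplit, Finset.sum_union hA']
    rw [sum_powersetCard_const hc, sum_image_insert (by simp) hc,
      sum_image_insert (by simp) hc, Finset.card_range, hd1, hd2]
    have hprod : ∏ i ∈ ({0, u + 2, u + 3} : Finset ℕ), x i = c * d * d := by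
      rw [Finset.prod_insert (by simp), Finset.prod_insert (by simp),
        Finset.prod_singleton, hd1, hd2, hc 0 (by simp)]
      ring
    rw [Finset.sum_singleton, hprod]
    ring
  have hchoose : ((u + 3).choose 3 : ℝ) = ((u + 2).choose 2 : ℝ) + ((u + 2).choose 3 : ℝ) := by
    rw [show u + 3 = (u + 2) + 1 from rfl, Nat.choose_succ_succ (u + 2) 2]
    push_cast; ring
  have hcast : ((u + 4 : ℕ) : ℝ) - 1 = (u : ℝ) + 3 := by push_cast; ring
  have hne : (u : ℝ) + 3 ≠ 0 := by positivity
  have heq : lagPoly (W (u + 4)) x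
      = 1 / (((u + 4 : ℕ) : ℝ) - 1) ^ 3 * ((Nat.choose (u + 4 - 1) 3 : ℝ) + 1 / 4) := by
    rw [key, hcast, h1, hchoose, hcdef, hddef]
    field_simp
    ring
  refine ⟨heq, ?_⟩
  rw [heq, h1, hcast]
  have hpos : (0 : ℝ) < ((u : ℝ) + 3) ^ 3 := by positivity
  calc ((u + 3).choose 3 : ℝ) / ((u : ℝ) + 3) ^ 3
      < (((u + 3).choose 3 : ℝ) + 1 / 4) / ((u : ℝ) + 3) ^ 3 := by gcongr; linarith
    _ = 1 / ((u : ℝ) + 3) ^ 3 * (((u + 3).choose 3 : ℝ) + 1 / 4) := by ring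
end
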